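/- For all natural numbers M ≥ 2, K ≥ 1, L ≥ 2, and for every j with 2 ≤ j ≤ L, the number of unordered pairs of distinct vertices of the spider graph Sp(M,K,L) at graph distance exactly j equals KM(L − j + 1) + M·K(K−1)/2·(j − 1) + KM(M − 1) + M·K²(M−1)/2·(j − 2). -/

import Mathlib

/-- Vertices of the spider graph `Sp(M,K,L)`: `M` core vertices plus
leg vertices `v_{m,k,ℓ}` for `m < M`, `k < K`, `ℓ < L`. -/
abbrev SpiderVertex (M K L : ℕ) := Fin M ⊕ (Fin M × Fin K × Fin L)

/-- Base relation generating the edges of the spider graph. -/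
def spiderRel (M K L : ℕ) : SpiderVertex M K L → SpiderVertex M K L → Prop
  | Sum.inl _, Sum.inl _ => True
  | Sum.inl m, Sum.inr (m', _, l) => m = m' ∧ (l : ℕ) = 0
  | Sum.inr _, Sum.inl _ => False
  | Sum.inr (m, k, l), Sum.inr (m', k', l') =>
      m = m' ∧ k = k' ∧ (l : ℕ) + 1 = (l' : ℕ)

/-- The spider graph `Sp(M,K,L)`. -/
def spiderGraph (M K L : ℕ) : SimpleGraph (SpiderVertex M K L) :=
  SimpleGraph.fromRel (spiderRel M K L)

instance (M K L : ℕ) : DecidableRel (spiderRel M K L) := fun x y =>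
  match x, y with
  | Sum.inl _, Sum.inl _ => inferInstanceAs (Decidable True)
  | Sum.inl m, Sum.inr (m', _, l) => inferInstanceAs (Decidable (m = m' ∧ (l : ℕ) = 0))
  | Sum.inr _, Sum.inl _ => inferInstanceAs (Decidable False)
  | Sum.inr (m, k, l), Sum.inr (m', k', l') =>
      inferInstanceAs (Decidable (m = m' ∧ k = k' ∧ (l : ℕ) + 1 = (l' : ℕ)))

instance (M K L : ℕ) : DecidableRel (spiderGraph M K L).Adj := fun x y =>
  inferInstanceAs (Decidable (x ≠ y ∧ (spiderRel M K L x y ∨ spiderRel M K L y x)))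

/-- `alphaSpider M K L j` is the number of unordered pairs of distinct vertices of
`Sp(M,K,L)` at graph distance exactly `j`. -/
noncomputable def alphaSpider (M K L j : ℕ) : ℕ :=
  Nat.card {p : Sym2 (SpiderVertex M K L) //
    ¬ p.IsDiag ∧ ∀ u v : SpiderVertex M K L, p = s(u, v) →
      (spiderGraph M K L).dist u v = j}

open SimpleGraph Finset

/-- explicit distance function -/
def dS (M K L : ℕ) : SpiderVertex M K L → SpiderVertex M K L → ℕ
  | Sum.inl m, Sum.inl m' => if (m:ℕ) = m' then 0 else 1
  | Sum.inl m, Sum.inr (m', _, l) => (l:ℕ) + (if (m:ℕ) = m' then 1 else 2)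
  | Sum.inr (m, _, l), Sum.inl m' => (l:ℕ) + (if (m':ℕ) = m then 1 else 2)
  | Sum.inr (m,k,l), Sum.inr (m',k',l') =>
      if (m:ℕ) = m' then
        (if (k:ℕ) = k' then (if (l:ℕ) ≤ l' then (l':ℕ) - l else (l:ℕ) - l')
         else (l:ℕ) + l' + 2)
      else (l:ℕ) + l' + 3

variable {M K L : ℕ}

lemma lip (u w v : SpiderVertex M K L) (h : (spiderGraph M K L).Adj u w) :
    dS M K L u v ≤ dS M K L w v + 1 := by
  rcases u with m | ⟨m, k, l⟩ <;> rcases w with m' | ⟨m', k', l'⟩ <;>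
    rcases v with m'' | ⟨m'', k'', l''⟩ <;>
    simp only [spiderGraph, fromRel_adj, spiderRel, ne_eq, Sum.inl.injEq, Sum.inr.injEq,
      Prod.mk.injEq, Fin.ext_iff, false_or, or_false, dS] at h ⊢ <;>
    casesm* _ ∨ _, _ ∧ _ <;> split_ifs <;> omega

lemma dS_self (u : SpiderVertex M K L) : dS M K L u u = 0 := by
  rcases u with m | ⟨m, k, l⟩ <;> simp [dS]

lemma dS_comm (u v : SpiderVertex M K L) : dS M K L u v = dS M K L v u := by
  rcases u with m | ⟨m, k, l⟩ <;> rcases v with m' | ⟨m', k', l'⟩ <;>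
    simp only [dS] <;> split_ifs <;> omega

lemma dS_le_length {u v : SpiderVertex M K L} (p : (spiderGraph M K L).Walk u v) :
    dS M K L u v ≤ p.length := by
  induction p with
  | nil => simp [dS_self]
  | cons h p ih =>
    simp only [Walk.length_cons]
    exact (lip _ _ _ h).trans (Nat.add_le_add_right ih 1)

lemma adj_cc {m m' : Fin M} (h : m ≠ m') :
    (spiderGraph M K L).Adj (Sum.inl m) (Sum.inl m') := by
  simp [spiderGraph, SimpleGraph.fromRel_adj, spiderRel, h]

lemma adj_c0 (m : Fin M) (k : Fin K) (h0 : 0 < L) :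
    (spiderGraph M K L).Adj (Sum.inl m) (Sum.inr (m, k, ⟨0, h0⟩)) := by
  simp [spiderGraph, SimpleGraph.fromRel_adj, spiderRel]

lemma adj_step (m : Fin M) (k : Fin K) (l : ℕ) (h : l + 1 < L) :
    (spiderGraph M K L).Adj (Sum.inr (m, k, ⟨l, by omega⟩)) (Sum.inr (m, k, ⟨l+1, h⟩)) := by
  simp [spiderGraph, SimpleGraph.fromRel_adj, spiderRel, Fin.ext_iff]

/-- walk from a leg vertex down to its core -/
def walkDown (m : Fin M) (k : Fin K) : (l : ℕ) → (h : l < L) →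
    (spiderGraph M K L).Walk (Sum.inr (m, k, ⟨l, h⟩)) (Sum.inl m)
  | 0, h => SimpleGraph.Walk.cons (adj_c0 m k h).symm SimpleGraph.Walk.nil
  | l+1, h => SimpleGraph.Walk.cons (adj_step m k l h).symm (walkDown m k l (by omega))

lemma walkDown_length (m : Fin M) (k : Fin K) (l : ℕ) (h : l < L) :
    (walkDown m k l h).length = l + 1 := by
  induction l with
  | zero => simp [walkDown]
  | succ n ih => simp [walkDown, ih]

/-- walk within a leg, from level a+t down to level a -/
def walkSeg (m : Fin M) (k : Fin K) (a : ℕ) : (t : ℕ) → (h : a + t < L) →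
    (spiderGraph M K L).Walk (Sum.inr (m, k, ⟨a + t, h⟩)) (Sum.inr (m, k, ⟨a, by omega⟩))
  | 0, _ => SimpleGraph.Walk.nil
  | t+1, h => SimpleGraph.Walk.cons (adj_step m k (a+t) h).symm (walkSeg m k a t (by omega))

lemma walkSeg_length (m : Fin M) (k : Fin K) (a t : ℕ) (h : a + t < L) :
    (walkSeg m k a t h).length = t := by
  induction t with
  | zero => simp [walkSeg]
  | succ n ih => simp [walkSeg, ih]

lemma dist_le_dS (u v : SpiderVertex M K L) :
    (spiderGraph M K L).dist u v ≤ dS M K L u v := by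
  rcases u with m | ⟨m, k, l⟩ <;> rcases v with m' | ⟨m', k', l'⟩
  · rcases eq_or_ne m m' with rfl | hne
    · simp [dS]
    · have := SimpleGraph.dist_le (SimpleGraph.Walk.cons (adj_cc (K := K) (L := L) hne)
        SimpleGraph.Walk.nil)
      simp only [dS, if_neg (fun hc => hne (Fin.ext hc))]
      simpa using this
  · -- core to leg
    rcases eq_or_ne m m' with rfl | hne
    · have := SimpleGraph.dist_le ((walkDown m k' l'.1 l'.2).reverse)
      simp only [dS, if_pos rfl]
      simpa [walkDown_length] using this
    · have := SimpleGraph.dist_le (SimpleGraph.Walk.cons (adj_cc hne)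
        ((walkDown m' k' l'.1 l'.2).reverse))
      simp only [dS, if_neg (fun hc => hne (Fin.ext hc))]
      simp only [SimpleGraph.Walk.length_cons, SimpleGraph.Walk.length_reverse,
        walkDown_length, Fin.eta] at this
      omega
  · -- leg to core
    rcases eq_or_ne m' m with rfl | hne
    · have := SimpleGraph.dist_le (walkDown m' k l.1 l.2)
      simp only [dS, if_pos rfl]
      simpa [walkDown_length] using this
    · have := SimpleGraph.dist_le ((walkDown m k l.1 l.2).append
        (SimpleGraph.Walk.cons (adj_cc (fun hc => hne hc.symm)) SimpleGraph.Walk.nil))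
      simp only [dS, if_neg (fun hc => hne (Fin.ext hc))]
      simp only [SimpleGraph.Walk.length_append, SimpleGraph.Walk.length_cons,
        SimpleGraph.Walk.length_nil, walkDown_length, Fin.eta] at this
      omega
  · -- leg to leg
    rcases eq_or_ne m m' with rfl | hnem
    · rcases eq_or_ne k k' with rfl | hnek
      · -- same leg
        rcases l with ⟨a, ha⟩; rcases l' with ⟨b, hb⟩
        have key : ∀ (a t : ℕ) (h : a + t < L),
            (spiderGraph M K L).dist (Sum.inr (m, k, ⟨a, by omega⟩))
              (Sum.inr (m, k, ⟨a + t, h⟩)) ≤ t := by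
          intro a t h
          have := SimpleGraph.dist_le ((walkSeg m k a t h).reverse)
          simpa [walkSeg_length] using this
        rcases le_or_gt a b with hle | hlt
        · obtain ⟨t, rfl⟩ : ∃ t, b = a + t := ⟨b - a, by omega⟩
          have hd : dS M K L (Sum.inr (m, k, ⟨a, ha⟩)) (Sum.inr (m, k, ⟨a + t, hb⟩)) = t := by
            simp only [dS]
            split_ifs <;> omega
          rw [hd]
          exact key a t hb
        · obtain ⟨t, rfl⟩ : ∃ t, a = b + t := ⟨a - b, by omega⟩
          have hd : dS M K L (Sum.inr (m, k, ⟨b + t, ha⟩)) (Sum.inr (m, k, ⟨b, hb⟩)) = t := by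
            simp only [dS]
            split_ifs <;> omega
          rw [hd, SimpleGraph.dist_comm]
          exact key b t ha
      · -- same core, different leg
        have := SimpleGraph.dist_le ((walkDown m k l.1 l.2).append
          ((walkDown m k' l'.1 l'.2).reverse))
        have hd : dS M K L (Sum.inr (m, k, l)) (Sum.inr (m, k', l')) = l.1 + l'.1 + 2 := by
          have hk : ¬((k:ℕ) = (k':ℕ)) := fun hc => hnek (Fin.ext hc)
          simp only [dS, if_pos rfl, if_true, if_neg hk]
        rw [hd]
        simp only [SimpleGraph.Walk.length_append, SimpleGraph.Walk.length_reverse,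
          walkDown_length, Fin.eta] at this
        omega
    · -- different cores
      have := SimpleGraph.dist_le ((walkDown m k l.1 l.2).append
        (SimpleGraph.Walk.cons (adj_cc hnem) ((walkDown m' k' l'.1 l'.2).reverse)))
      have hd : dS M K L (Sum.inr (m, k, l)) (Sum.inr (m', k', l')) = l.1 + l'.1 + 3 := by
        have hm : ¬((m:ℕ) = (m':ℕ)) := fun hc => hnem (Fin.ext hc)
        simp only [dS, if_neg hm]
      rw [hd]
      simp only [SimpleGraph.Walk.length_append, SimpleGraph.Walk.length_cons,
        SimpleGraph.Walk.length_reverse, walkDown_length, Fin.eta] at this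
      omega

lemma spider_reachable (u v : SpiderVertex M K L) : (spiderGraph M K L).Reachable u v := by
  have hcore : ∀ w : SpiderVertex M K L, ∃ m : Fin M,
      (spiderGraph M K L).Reachable w (Sum.inl m) := by
    intro w
    rcases w with m | ⟨m, k, l⟩
    · exact ⟨m, SimpleGraph.Reachable.refl _⟩
    · exact ⟨m, ⟨(walkDown m k l.1 l.2).copy (by simp) rfl⟩⟩
  obtain ⟨m, hm⟩ := hcore u
  obtain ⟨m', hm'⟩ := hcore v
  refine hm.trans (SimpleGraph.Reachable.trans ?_ hm'.symm)
  rcases eq_or_ne m m' with rfl | hne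
  · exact SimpleGraph.Reachable.refl _
  · exact (adj_cc hne).reachable

lemma dist_eq_dS (u v : SpiderVertex M K L) :
    (spiderGraph M K L).dist u v = dS M K L u v := by
  refine le_antisymm (dist_le_dS u v) ?_
  obtain ⟨p, hp⟩ := (spider_reachable u v).exists_walk_length_eq_dist
  rw [← hp]
  exact dS_le_length p

/-! ### counting helpers -/

lemma count_range {n : ℕ} (p : ℕ → Prop) [DecidablePred p] (S : Finset ℕ)
    (h : ∀ x, x < n ∧ p x ↔ x ∈ S) :
    (∑ i ∈ Finset.range n, if p i then (1:ℕ) else 0) = S.card := by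
  rw [← Finset.card_filter]
  congr 1
  ext x
  simp only [Finset.mem_filter, Finset.mem_range]
  exact h x

lemma E1M (m : Fin M) : (∑ m' : Fin M, if (m:ℕ) = (m':ℕ) then (1:ℕ) else 0) = 1 := by
  rw [Fin.sum_univ_eq_sum_range (fun i => if (m:ℕ) = i then (1:ℕ) else 0) M,
    count_range _ {(m:ℕ)} (fun x => by simp; constructor <;> intro h <;> omega),
    Finset.card_singleton]

lemma E2M (m : Fin M) : (∑ m' : Fin M, if (m:ℕ) = (m':ℕ) then (0:ℕ) else 1) = M - 1 := by
  have pt : ∀ i : ℕ, (if (m:ℕ) = i then (0:ℕ) else 1) = (if ¬((m:ℕ) = i) then (1:ℕ) else 0) := by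
    intro i; split_ifs <;> simp_all
  simp only [pt]
  rw [Fin.sum_univ_eq_sum_range (fun i => if ¬((m:ℕ) = i) then (1:ℕ) else 0) M,
    count_range _ ((Finset.range M).erase (m:ℕ)) (fun x => by
      simp only [Finset.mem_erase, Finset.mem_range]
      constructor <;> intro h <;> [exact ⟨fun hc => h.2 hc.symm, h.1⟩;
        exact ⟨h.2, fun hc => h.1 hc.symm⟩])]
  rw [Finset.card_erase_of_mem (by simp [m.2]), Finset.card_range]

lemma E1K (k : Fin K) : (∑ k' : Fin K, if (k:ℕ) = (k':ℕ) then (1:ℕ) else 0) = 1 := E1M k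

lemma E2K (k : Fin K) : (∑ k' : Fin K, if (k:ℕ) = (k':ℕ) then (0:ℕ) else 1) = K - 1 := E2M k

lemma P1 {j : ℕ} (hj1 : 1 ≤ j) (l : Fin L) :
    (∑ l' : Fin L, if (if (l:ℕ) ≤ (l':ℕ) then (l':ℕ) - (l:ℕ) else (l:ℕ) - (l':ℕ)) = j
      then (1:ℕ) else 0)
    = (if (l:ℕ) + j < L then 1 else 0) + (if j ≤ (l:ℕ) then 1 else 0) := by
  rw [Fin.sum_univ_eq_sum_range
    (fun i => if (if (l:ℕ) ≤ i then i - (l:ℕ) else (l:ℕ) - i) = j then (1:ℕ) else 0) L]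
  by_cases h1 : (l:ℕ) + j < L <;> by_cases h2 : j ≤ (l:ℕ)
  · rw [count_range _ {(l:ℕ) + j, (l:ℕ) - j} (fun x => by
      simp only [Finset.mem_insert, Finset.mem_singleton]
      split_ifs <;> constructor <;> intro h <;> omega)]
    rw [Finset.card_pair (by omega), if_pos h1, if_pos h2]
  · rw [count_range _ {(l:ℕ) + j} (fun x => by
      simp only [Finset.mem_singleton]
      split_ifs <;> constructor <;> intro h <;> omega)]
    rw [Finset.card_singleton, if_pos h1, if_neg h2]
  · rw [count_range _ {(l:ℕ) - j} (fun x => by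
      simp only [Finset.mem_singleton]
      split_ifs <;> constructor <;> intro h <;> omega)]
    rw [Finset.card_singleton, if_neg h1, if_pos h2]
  · rw [count_range _ ∅ (fun x => by
      simp only [Finset.notMem_empty, iff_false]
      split_ifs <;> omega)]
    rw [Finset.card_empty, if_neg h1, if_neg h2]

lemma P2 {j : ℕ} (hjL : j ≤ L) (l : Fin L) :
    (∑ l' : Fin L, if (l:ℕ) + (l':ℕ) + 2 = j then (1:ℕ) else 0)
      = if (l:ℕ) + 2 ≤ j then 1 else 0 := by
  rw [Fin.sum_univ_eq_sum_range (fun i => if (l:ℕ) + i + 2 = j then (1:ℕ) else 0) L]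
  by_cases h : (l:ℕ) + 2 ≤ j
  · rw [count_range _ {j - (l:ℕ) - 2} (fun x => by
      simp only [Finset.mem_singleton]; constructor <;> intro h <;> omega)]
    rw [Finset.card_singleton, if_pos h]
  · rw [count_range _ ∅ (fun x => by
      simp only [Finset.notMem_empty, iff_false]; omega)]
    rw [Finset.card_empty, if_neg h]

lemma P3 {j : ℕ} (hjL : j ≤ L) (l : Fin L) :
    (∑ l' : Fin L, if (l:ℕ) + (l':ℕ) + 3 = j then (1:ℕ) else 0)
      = if (l:ℕ) + 3 ≤ j then 1 else 0 := by
  rw [Fin.sum_univ_eq_sum_range (fun i => if (l:ℕ) + i + 3 = j then (1:ℕ) else 0) L]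
  by_cases h : (l:ℕ) + 3 ≤ j
  · rw [count_range _ {j - (l:ℕ) - 3} (fun x => by
      simp only [Finset.mem_singleton]; constructor <;> intro h <;> omega)]
    rw [Finset.card_singleton, if_pos h]
  · rw [count_range _ ∅ (fun x => by
      simp only [Finset.notMem_empty, iff_false]; omega)]
    rw [Finset.card_empty, if_neg h]

lemma P4 {j : ℕ} (c : ℕ) (h1 : 1 ≤ c) (h2 : c ≤ j) (h3 : j - c < L) :
    (∑ l' : Fin L, if (l':ℕ) + c = j then (1:ℕ) else 0) = 1 := by
  rw [Fin.sum_univ_eq_sum_range (fun i => if i + c = j then (1:ℕ) else 0) L,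
    count_range _ {j - c} (fun x => by
      simp only [Finset.mem_singleton]; constructor <;> intro h <;> omega),
    Finset.card_singleton]

lemma F1 {j : ℕ} : (∑ l : Fin L, if (l:ℕ) + j < L then (1:ℕ) else 0) = L - j := by
  rw [Fin.sum_univ_eq_sum_range (fun i => if i + j < L then (1:ℕ) else 0) L,
    count_range _ (Finset.range (L - j)) (fun x => by
      simp only [Finset.mem_range]; omega),
    Finset.card_range]

lemma F2 {j : ℕ} : (∑ l : Fin L, if j ≤ (l:ℕ) then (1:ℕ) else 0) = L - j := by
  rw [Fin.sum_univ_eq_sum_range (fun i => if j ≤ i then (1:ℕ) else 0) L,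
    count_range _ (Finset.Ico j L) (fun x => by
      simp only [Finset.mem_Ico]; omega),
    Nat.card_Ico]

lemma F3 {j : ℕ} (hjL : j ≤ L) : (∑ l : Fin L, if (l:ℕ) + 2 ≤ j then (1:ℕ) else 0) = j - 1 := by
  rw [Fin.sum_univ_eq_sum_range (fun i => if i + 2 ≤ j then (1:ℕ) else 0) L,
    count_range _ (Finset.range (j - 1)) (fun x => by
      simp only [Finset.mem_range]; omega),
    Finset.card_range]

lemma F4 {j : ℕ} (hjL : j ≤ L) : (∑ l : Fin L, if (l:ℕ) + 3 ≤ j then (1:ℕ) else 0) = j - 2 := by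
  rw [Fin.sum_univ_eq_sum_range (fun i => if i + 3 ≤ j then (1:ℕ) else 0) L,
    count_range _ (Finset.range (j - 2)) (fun x => by
      simp only [Finset.mem_range]; omega),
    Finset.card_range]

lemma E1M' (m : Fin M) : (∑ m' : Fin M, if (m':ℕ) = (m:ℕ) then (1:ℕ) else 0) = 1 := by
  have pt : ∀ i : Fin M, (if (i:ℕ) = (m:ℕ) then (1:ℕ) else 0)
      = (if (m:ℕ) = (i:ℕ) then (1:ℕ) else 0) := by
    intro i; split_ifs <;> omega
  simp only [pt]; exact E1M m

lemma E2M' (m : Fin M) : (∑ m' : Fin M, if (m':ℕ) = (m:ℕ) then (0:ℕ) else 1) = M - 1 := by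
  have pt : ∀ i : Fin M, (if (i:ℕ) = (m:ℕ) then (0:ℕ) else 1)
      = (if (m:ℕ) = (i:ℕ) then (0:ℕ) else 1) := by
    intro i; split_ifs <;> omega
  simp only [pt]; exact E2M m

variable {j : ℕ}

lemma Bcc (hj2 : 2 ≤ j) (m : Fin M) :
    (∑ m' : Fin M, if ((Sum.inl m : SpiderVertex M K L) ≠ Sum.inl m'
        ∧ dS M K L (Sum.inl m) (Sum.inl m') = j) then (1:ℕ) else 0) = 0 := by
  refine Finset.sum_eq_zero fun m' _ => ?_
  rw [if_neg]
  rintro ⟨h1, h2⟩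
  simp only [dS] at h2
  split_ifs at h2 <;> omega

lemma Bcl (hj2 : 2 ≤ j) (hjL : j ≤ L) (m : Fin M) :
    (∑ m' : Fin M, ∑ k' : Fin K, ∑ l' : Fin L,
      if ((Sum.inl m : SpiderVertex M K L) ≠ Sum.inr (m', k', l')
        ∧ dS M K L (Sum.inl m) (Sum.inr (m', k', l')) = j) then (1:ℕ) else 0) = M * K := by
  have point : ∀ (m' : Fin M) (k' : Fin K) (l' : Fin L),
      (if ((Sum.inl m : SpiderVertex M K L) ≠ Sum.inr (m', k', l')
        ∧ dS M K L (Sum.inl m) (Sum.inr (m', k', l')) = j) then (1:ℕ) else 0)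
      = if (l':ℕ) + (if (m:ℕ) = (m':ℕ) then 1 else 2) = j then (1:ℕ) else 0 :=
    fun m' k' l' => if_congr (by simp [dS]) rfl rfl
  simp only [point]
  have inner : ∀ m' : Fin M,
      (∑ l' : Fin L, if (l':ℕ) + (if (m:ℕ) = (m':ℕ) then 1 else 2) = j then (1:ℕ) else 0)
        = 1 := by
    intro m'
    by_cases h : (m:ℕ) = (m':ℕ)
    · simp only [if_pos h]; exact P4 1 (by omega) (by omega) (by omega)
    · simp only [if_neg h]; exact P4 2 (by omega) (by omega) (by omega)
  simp only [inner, Finset.sum_const, Finset.card_univ, Fintype.card_fin, smul_eq_mul, mul_one]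

lemma Blc (hj2 : 2 ≤ j) (hjL : j ≤ L) (m : Fin M) (k : Fin K) :
    (∑ l : Fin L, ∑ m' : Fin M,
      if ((Sum.inr (m, k, l) : SpiderVertex M K L) ≠ Sum.inl m'
        ∧ dS M K L (Sum.inr (m, k, l)) (Sum.inl m') = j) then (1:ℕ) else 0)
      = 1 + (M - 1) := by
  have point : ∀ (l : Fin L) (m' : Fin M),
      (if ((Sum.inr (m, k, l) : SpiderVertex M K L) ≠ Sum.inl m'
        ∧ dS M K L (Sum.inr (m, k, l)) (Sum.inl m') = j) then (1:ℕ) else 0)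
      = (if (m':ℕ) = (m:ℕ) then (1:ℕ) else 0) * (if (l:ℕ) + 1 = j then (1:ℕ) else 0)
        + (if (m':ℕ) = (m:ℕ) then (0:ℕ) else 1) * (if (l:ℕ) + 2 = j then (1:ℕ) else 0) := by
    intro l m'
    have hne : ((Sum.inr (m, k, l) : SpiderVertex M K L) ≠ Sum.inl m') := by simp
    simp only [dS, hne, ne_eq, not_false_eq_true, true_and]
    split_ifs <;> omega
  simp only [point, Finset.sum_add_distrib, ← Finset.sum_mul, ← Finset.mul_sum, E1M', E2M',
    one_mul]
  rw [P4 1 (by omega) (by omega) (by omega), P4 2 (by omega) (by omega) (by omega), mul_one]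

lemma Bll (hj2 : 2 ≤ j) (hjL : j ≤ L) (m : Fin M) (k : Fin K) :
    (∑ l : Fin L, ∑ m' : Fin M, ∑ k' : Fin K, ∑ l' : Fin L,
      if ((Sum.inr (m, k, l) : SpiderVertex M K L) ≠ Sum.inr (m', k', l')
        ∧ dS M K L (Sum.inr (m, k, l)) (Sum.inr (m', k', l')) = j) then (1:ℕ) else 0)
    = ((L - j) + (L - j)) + (K - 1) * (j - 1) + (M - 1) * (K * (j - 2)) := by
  have point : ∀ (l : Fin L) (m' : Fin M) (k' : Fin K) (l' : Fin L),
      (if ((Sum.inr (m, k, l) : SpiderVertex M K L) ≠ Sum.inr (m', k', l')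
        ∧ dS M K L (Sum.inr (m, k, l)) (Sum.inr (m', k', l')) = j) then (1:ℕ) else 0)
      = (if (m:ℕ) = (m':ℕ) then (1:ℕ) else 0) * ((if (k:ℕ) = (k':ℕ) then (1:ℕ) else 0)
            * (if (if (l:ℕ) ≤ (l':ℕ) then (l':ℕ) - (l:ℕ) else (l:ℕ) - (l':ℕ)) = j
                then (1:ℕ) else 0))
        + (if (m:ℕ) = (m':ℕ) then (1:ℕ) else 0) * ((if (k:ℕ) = (k':ℕ) then (0:ℕ) else 1)
            * (if (l:ℕ) + (l':ℕ) + 2 = j then (1:ℕ) else 0))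
        + (if (m:ℕ) = (m':ℕ) then (0:ℕ) else 1)
            * (if (l:ℕ) + (l':ℕ) + 3 = j then (1:ℕ) else 0) := by
    intro l m' k' l'
    simp only [ne_eq, Sum.inr.injEq, Prod.mk.injEq, Fin.ext_iff, dS]
    split_ifs <;> omega
  simp only [point, Finset.sum_add_distrib, ← Finset.mul_sum, ← Finset.sum_mul,
    E1M, E2M, E1K, E2K, P1 (show 1 ≤ j by omega), P2 hjL, P3 hjL, one_mul,
    Finset.sum_const, Finset.card_univ, Fintype.card_fin, smul_eq_mul,
    F1, F2, F3 hjL, F4 hjL]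

lemma card_pairs (hj2 : 2 ≤ j) (hjL : j ≤ L) :
    (Finset.univ.filter fun x : SpiderVertex M K L × SpiderVertex M K L =>
        x.1 ≠ x.2 ∧ dS M K L x.1 x.2 = j).card
    = M * (M * K) + M * (K * ((1 + (M - 1))
        + (((L - j) + (L - j)) + (K - 1) * (j - 1) + (M - 1) * (K * (j - 2))))) := by
  rw [Finset.card_filter]
  rw [Fintype.sum_prod_type]
  simp only [Fintype.sum_sum_type, Fintype.sum_prod_type]
  simp only [Bcc hj2, Bcl hj2 hjL, Blc hj2 hjL, Bll hj2 hjL, zero_add,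
    Finset.sum_add_distrib, Finset.sum_const, Finset.card_univ, Fintype.card_fin, smul_eq_mul]
  ring

open Classical in
lemma two_mul_sym2 (hj : 1 ≤ j) :
    (Finset.univ.filter fun x : SpiderVertex M K L × SpiderVertex M K L =>
        x.1 ≠ x.2 ∧ dS M K L x.1 x.2 = j).card
    = 2 * (Finset.univ.filter fun p : Sym2 (SpiderVertex M K L) =>
        ¬ p.IsDiag ∧ ∀ u v, p = s(u, v) → dS M K L u v = j).card := by
  classical
  rw [Finset.card_eq_sum_card_fiberwise
    (f := fun x : SpiderVertex M K L × SpiderVertex M K L => s(x.1, x.2))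
    (t := Finset.univ.filter fun p : Sym2 (SpiderVertex M K L) =>
        ¬ p.IsDiag ∧ ∀ u v, p = s(u, v) → dS M K L u v = j)]
  · rw [Finset.sum_congr rfl (g := fun _ => 2) ?_, Finset.sum_const, smul_eq_mul, mul_comm]
    intro p hp
    simp only [Finset.mem_filter, Finset.mem_univ, true_and] at hp
    induction p using Sym2.ind with
    | _ u v =>
      obtain ⟨hd, hall⟩ := hp
      have hne : u ≠ v := fun hc => hd (Sym2.mk_isDiag_iff.mpr hc)
      have hR : dS M K L u v = j := hall u v rfl
      have : (Finset.univ.filter fun x : SpiderVertex M K L × SpiderVertex M K L =>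
          (x.1 ≠ x.2 ∧ dS M K L x.1 x.2 = j) ∧ s(x.1, x.2) = s(u, v)) = {(u, v), (v, u)} := by
        ext ⟨a, b⟩
        simp only [Finset.mem_filter, Finset.mem_univ, true_and, Sym2.eq_iff,
          Finset.mem_insert, Finset.mem_singleton, Prod.mk.injEq]
        constructor
        · rintro ⟨-, (⟨rfl, rfl⟩ | ⟨rfl, rfl⟩)⟩
          · exact Or.inl ⟨rfl, rfl⟩
          · exact Or.inr ⟨rfl, rfl⟩
        · rintro (⟨rfl, rfl⟩ | ⟨rfl, rfl⟩)
          · exact ⟨⟨hne, hR⟩, Or.inl ⟨rfl, rfl⟩⟩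
          · exact ⟨⟨hne.symm, by rw [dS_comm]; exact hR⟩, Or.inr ⟨rfl, rfl⟩⟩
      rw [Finset.filter_filter, this,
        Finset.card_pair (by simp only [ne_eq, Prod.mk.injEq, not_and]; exact fun h _ => hne h)]
  · rintro ⟨a, b⟩ hx
    simp only [Finset.mem_coe, Finset.mem_filter, Finset.mem_univ, true_and] at hx ⊢
    obtain ⟨hne, hR⟩ := hx
    refine ⟨fun hd => hne (Sym2.mk_isDiag_iff.mp hd), ?_⟩
    intro u v huv
    rcases Sym2.eq_iff.mp huv.symm with ⟨rfl, rfl⟩ | ⟨rfl, rfl⟩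
    · exact hR
    · exact (by rw [dS_comm]; exact hR)

lemma alpha_eq (hj : 1 ≤ j) :
    2 * alphaSpider M K L j
    = (Finset.univ.filter fun x : SpiderVertex M K L × SpiderVertex M K L =>
        x.1 ≠ x.2 ∧ dS M K L x.1 x.2 = j).card := by
  classical
  rw [two_mul_sym2 hj]
  congr 1
  rw [alphaSpider, Nat.card_eq_fintype_card, Fintype.card_subtype]
  congr 1
  ext p
  simp only [dist_eq_dS]

/-- For all `M ≥ 2`, `K ≥ 1`, `L ≥ 2` and `2 ≤ j ≤ L`, the number of
unordered pairs of distinct vertices of `Sp(M,K,L)` at distance exactly `j` equals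
`KM(L − j + 1) + M·K(K−1)/2·(j−1) + KM(M−1) + M·K²(M−1)/2·(j−2)`. -/
theorem spider_alpha_small (M K L j : ℕ) (hM : 2 ≤ M) (hK : 1 ≤ K) (hL : 2 ≤ L)
    (hj2 : 2 ≤ j) (hjL : j ≤ L) :
    alphaSpider M K L j =
      K * M * (L - j + 1) + M * K * (K - 1) / 2 * (j - 1) + K * M * (M - 1)
        + M * K ^ 2 * (M - 1) / 2 * (j - 2) := by
  have h2 : 2 * alphaSpider M K L j
      = M * (M * K) + M * (K * ((1 + (M - 1))
        + (((L - j) + (L - j)) + (K - 1) * (j - 1) + (M - 1) * (K * (j - 2))))) :=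
    (alpha_eq (by omega)).trans (card_pairs hj2 hjL)
  obtain ⟨u, hu⟩ : ∃ u, K * (K - 1) = u + u := by
    have := Nat.even_mul_succ_self (K - 1)
    rwa [Nat.sub_add_cancel hK, mul_comm] at this
  obtain ⟨v, hv⟩ : ∃ v, M * (M - 1) = v + v := by
    have := Nat.even_mul_succ_self (M - 1)
    rwa [Nat.sub_add_cancel (by omega), mul_comm] at this
  have hs : M * K * (K - 1) = 2 * (M * u) := by rw [mul_assoc, hu]; ring
  have ht : M * K ^ 2 * (M - 1) = 2 * (v * K ^ 2) := by
    rw [show M * K ^ 2 * (M - 1) = (M * (M - 1)) * K ^ 2 from by ring, hv]; ring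
  rw [hs, ht, show 2 * (M * u) / 2 = M * u from by omega,
    show 2 * (v * K ^ 2) / 2 = v * K ^ 2 from by omega]
  have key : M * (M * K) + M * (K * ((1 + (M - 1))
        + (((L - j) + (L - j)) + (K - 1) * (j - 1) + (M - 1) * (K * (j - 2)))))
      = 2 * (K * M * (L - j + 1) + M * u * (j - 1) + K * M * (M - 1)
        + v * K ^ 2 * (j - 2)) := by
    have hu' : (K:ℤ) * ((K:ℤ) - 1) = 2 * u := by zify [hK] at hu; linarith
    have hv' : (M:ℤ) * ((M:ℤ) - 1) = 2 * v := by
      zify [show 1 ≤ M by omega] at hv; linarith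
    zify [hjL, hK, show 1 ≤ j by omega, hj2, show 1 ≤ M by omega]
    linear_combination ((M:ℤ) * ((j:ℤ) - 1)) * hu' + ((K:ℤ) ^ 2 * ((j:ℤ) - 2)) * hv'
  omega
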